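/- Let s ∈ (0,1), let λ = 2s/(1 + s²), and define b : [0,1) → ℝ by b(x) = μ̃(μ(x)²), where μ(x) = (x + s)/(1 + sx) and μ̃(x) = (x − s²)/(1 − s²x). Then for all x, y with 0 ≤ x < y < 1: b(y) − b(x) = (y − x)·(y + x + λ(1 + xy)) / ((1 + λy)(1 + λx)), and consequently λ·(y − x) ≤ b(y) − b(x) ≤ (2/(1 + λ))·(y − x). -/

import Mathlib

/-- For the Blaschke product `b(x) = μ̃(μ(x)²)` with `μ(x) = (x+s)/(1+sx)`,
`μ̃(x) = (x−s²)/(1−s²x)` and `λ = 2s/(1+s²)`: for `0 ≤ x < y < 1`,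
`b(y) − b(x) = (y−x)(y+x+λ(1+xy))/((1+λy)(1+λx))`, and hence
`λ(y−x) ≤ b(y) − b(x) ≤ (2/(1+λ))(y−x)`. -/
theorem blaschke_semi_difference_bounds
    (s : ℝ) (hs : s ∈ Set.Ioo (0 : ℝ) 1)
    (lam : ℝ) (hlam : lam = 2 * s / (1 + s ^ 2))
    (μ μt b : ℝ → ℝ)
    (hμ : ∀ x : ℝ, μ x = (x + s) / (1 + s * x))
    (hμt : ∀ x : ℝ, μt x = (x - s ^ 2) / (1 - s ^ 2 * x))
    (hb : ∀ x : ℝ, b x = μt ((μ x) ^ 2)) :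
    ∀ x y : ℝ, 0 ≤ x → x < y → y < 1 →
      b y - b x = (y - x) * (y + x + lam * (1 + x * y)) / ((1 + lam * y) * (1 + lam * x)) ∧
      lam * (y - x) ≤ b y - b x ∧ b y - b x ≤ (2 / (1 + lam)) * (y - x) := by
  obtain ⟨hs0, hs1⟩ := hs
  have hss : (0:ℝ) < 1 + s ^ 2 := by positivity
  have hlam0 : 0 < lam := by rw [hlam]; positivity
  have hlam1 : lam < 1 := by
    rw [hlam, div_lt_one hss]; nlinarith
  -- closed form of b on [0,1)
  have hbval : ∀ x : ℝ, 0 ≤ x → x < 1 → b x = x * (x + lam) / (1 + lam * x) := by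
    intro x hx hx1
    have hd : (0:ℝ) < 1 + s * x := by nlinarith
    have h2 : 1 - s ^ 2 * ((x + s) / (1 + s * x)) ^ 2
        = (1 - s ^ 2) * (1 + s ^ 2 + 2 * s * x) / (1 + s * x) ^ 2 := by
      field_simp; ring
    have h2pos : 0 < 1 - s ^ 2 * ((x + s) / (1 + s * x)) ^ 2 := by
      rw [h2]
      exact div_pos (mul_pos (by nlinarith) (by nlinarith)) (by positivity)
    have hlx : (0:ℝ) < 1 + lam * x := by nlinarith
    have h3 : ((x + s) / (1 + s * x)) ^ 2 - s ^ 2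
        = x * (1 - s ^ 2) * ((1 + s ^ 2) * x + 2 * s) / (1 + s * x) ^ 2 := by
      field_simp; ring
    have hB : (0:ℝ) < (1 - s ^ 2) * (1 + s ^ 2 + 2 * s * x) :=
      mul_pos (by nlinarith) (by nlinarith)
    rw [hb, hμt, hμ, hlam, h3, h2]
    rw [div_div_div_eq]
    field_simp [hB.ne']
    have h1s : (1:ℝ) - s ^ 2 ≠ 0 := (by nlinarith : (0:ℝ) < 1 - s ^ 2).ne'
    linear_combination x * mul_inv_cancel₀ h1s
  intro x y hx hxy hy1
  have hx1 : x < 1 := hxy.trans hy1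
  have hy0 : 0 ≤ y := hx.trans hxy.le
  have hlx : (0:ℝ) < 1 + lam * x := by nlinarith
  have hly : (0:ℝ) < 1 + lam * y := by nlinarith
  have hD : (0:ℝ) < (1 + lam * y) * (1 + lam * x) := mul_pos hly hlx
  have hdiff : b y - b x
      = (y - x) * (y + x + lam * (1 + x * y)) / ((1 + lam * y) * (1 + lam * x)) := by
    rw [hbval x hx hx1, hbval y hy0 hy1]
    field_simp
    ring
  have hxy1 : (0:ℝ) ≤ 1 - x * y := by nlinarith
  have hl2 : (0:ℝ) ≤ 1 - lam ^ 2 := by nlinarith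
  have hsum : (0:ℝ) ≤ x + y + lam * (x * y) := by
    have := mul_nonneg hlam0.le (mul_nonneg hx hy0); linarith
  have hinner : (0:ℝ) ≤ (1 - lam) * ((2 - x - y) + lam * (1 - x * y)) :=
    mul_nonneg (by linarith) (by nlinarith [mul_nonneg hlam0.le hxy1])
  refine ⟨hdiff, ?_, ?_⟩
  · rw [hdiff, le_div_iff₀ hD]
    nlinarith [mul_nonneg (sub_pos.mpr hxy).le (mul_nonneg hl2 hsum)]
  · rw [hdiff, div_le_iff₀ hD, div_mul_eq_mul_div, div_mul_eq_mul_div,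
      le_div_iff₀ (by nlinarith : (0:ℝ) < 1 + lam)]
    nlinarith [mul_nonneg (sub_pos.mpr hxy).le hinner]
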